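/- If k/(k+1) < p ≤ (k+1)/(k+2) < t for some positive integer k, then for every nonnegative sequence (c_i) summing to 1, P(Σ c_i β_i ≥ t) ≤ p, with equality for c_1 = 1. That is, bold play (staking everything on one bet) is optimal. -/

import Mathlib

open MeasureTheory ProbabilityTheory Finset
open scoped ENNReal

variable {b : ℕ} [NeZero b]

lemma val_sub_nat (z : ZMod b) (m : ℕ) (hm : m < b) :
    (z - (m : ZMod b)).val = if m ≤ z.val then z.val - m else z.val + b - m := by
  have hb : 0 < b := Nat.pos_of_ne_zero (NeZero.ne b)
  have hzv : z.val < b := ZMod.val_lt z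
  have key : (z - (m : ZMod b)) = ((z.val + b - m : ℕ) : ZMod b) := by
    have : (↑(z.val + b - m) : ZMod b) = ((z.val + b - m : ℕ) : ZMod b) := rfl
    rw [Nat.cast_sub (by omega : m ≤ z.val + b)]
    push_cast
    simp [ZMod.natCast_val, ZMod.cast_id, ZMod.natCast_self]
  rw [key, ZMod.val_natCast]
  split_ifs with h
  · have h2 : z.val + b - m = (z.val - m) + b := by omega
    rw [h2, Nat.add_mod_right, Nat.mod_eq_of_lt (by omega)]
  · exact Nat.mod_eq_of_lt (by omega)

variable {b : ℕ} [NeZero b]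

lemma closed_sub_one_univ (S : Finset (ZMod b)) (hne : S.Nonempty)
    (hcl : ∀ x ∈ S, x - 1 ∈ S) : S = univ := by
  obtain ⟨x₀, hx₀⟩ := hne
  have key : ∀ n : ℕ, x₀ - (n : ZMod b) ∈ S := by
    intro n; induction n with
    | zero => simpa using hx₀
    | succ n ih =>
        have h2 := hcl _ ih
        have : x₀ - ((n : ℕ) + 1 : ZMod b) = x₀ - (n : ZMod b) - 1 := by ring
        rw [show ((n+1 : ℕ) : ZMod b) = ((n : ℕ) + 1 : ZMod b) by push_cast; ring, this]
        exact h2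
  apply Finset.eq_univ_of_forall
  intro y
  have hy : y = x₀ - ((x₀ - y).val : ℕ) := by
    rw [ZMod.natCast_val, ZMod.cast_id]; ring
  rw [hy]; exact key _

lemma sumset_card (S : Finset (ZMod b)) (hne : S.Nonempty) (d : ℕ) :
    min b (S.card + d) ≤ (univ.filter fun x => ∃ j : ℕ, j ≤ d ∧ x + (j : ZMod b) ∈ S).card := by
  induction d with
  | zero =>
      have hsub : S ⊆ univ.filter fun x => ∃ j : ℕ, j ≤ 0 ∧ x + (j : ZMod b) ∈ S := by
        intro x hx; simp only [mem_filter, mem_univ, true_and]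
        exact ⟨0, le_refl _, by simpa using hx⟩
      calc min b (S.card + 0) ≤ S.card := by omega
        _ ≤ _ := card_le_card hsub
  | succ d ih =>
      set T : ℕ → Finset (ZMod b) :=
        fun d => univ.filter fun x => ∃ j : ℕ, j ≤ d ∧ x + (j : ZMod b) ∈ S with hT
      have hmono : T d ⊆ T (d+1) := by
        intro x hx; simp only [hT, mem_filter, mem_univ, true_and] at hx ⊢
        obtain ⟨j, hj, hjS⟩ := hx; exact ⟨j, by omega, hjS⟩
      have hTne : (T d).Nonempty := by
        obtain ⟨x₀, hx₀⟩ := hne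
        refine ⟨x₀, ?_⟩
        simp only [hT, mem_filter, mem_univ, true_and]
        exact ⟨0, by omega, by simpa using hx₀⟩
      have ih' : b ⊓ (S.card + d) ≤ (T d).card := ih
      have goal' : b ⊓ (S.card + (d+1)) ≤ (T (d+1)).card → b ⊓ (S.card + (d+1)) ≤
          (univ.filter fun x => ∃ j : ℕ, j ≤ d + 1 ∧ x + (j : ZMod b) ∈ S).card := fun h => h
      apply goal'
      by_cases hcl : ∀ x ∈ T d, x - 1 ∈ T d
      · have huniv : T d = univ := closed_sub_one_univ _ hTne hcl
        have h1 : (T d).card = b := by rw [huniv, card_univ, ZMod.card]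
        have h2 := card_le_card hmono
        omega
      · push_neg at hcl
        obtain ⟨x, hx, hx1⟩ := hcl
        have hx1' : x - 1 ∈ T (d+1) := by
          simp only [hT, mem_filter, mem_univ, true_and] at hx ⊢
          obtain ⟨j, hj, hjS⟩ := hx
          refine ⟨j+1, by omega, ?_⟩
          rw [show ((j+1 : ℕ) : ZMod b) = ((j : ℕ) + 1 : ZMod b) by push_cast; ring]
          rw [show x - 1 + ((j : ZMod b) + 1) = x + (j : ZMod b) by ring]
          exact hjS
        have hins : insert (x-1) (T d) ⊆ T (d+1) := by
          intro y hy; rcases Finset.mem_insert.mp hy with h | h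
          · rwa [h]
          · exact hmono h
        have hcard : (T d).card + 1 ≤ (T (d+1)).card := by
          have := card_le_card hins
          rwa [Finset.card_insert_of_notMem hx1] at this
        omega

lemma window_unique {b a k : ℕ} [NeZero b] (ha : (k+1)*a < b) (hb : b ≤ (k+2)*a)
    (y : ZMod b) (C : ℝ) :
    ∑ j ∈ range (k+2),
      (if (y - ((j*a : ℕ) : ZMod b)).val < (if j ≤ k then a else b - (k+1)*a) then C else 0)
      = C := by
  have hb0 : 0 < b := Nat.pos_of_ne_zero (NeZero.ne b)
  have ha0 : 0 < a := by
    rcases Nat.eq_zero_or_pos a with h | h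
    · subst h; simp at hb; omega
    · exact h
  set r := y.val with hr
  have hrb : r < b := ZMod.val_lt y
  set j₀ := min (r / a) (k+1) with hj₀def
  have hdm := Nat.div_add_mod r a
  have hmod : r % a < a := Nat.mod_lt _ ha0
  have hj₀le : j₀ ≤ k + 1 := min_le_right _ _
  have hj₀a : j₀ * a ≤ r := by
    have h1 : (r/a) * a ≤ r := Nat.div_mul_le_self r a
    have h2 : j₀ * a ≤ (r/a) * a := Nat.mul_le_mul_right a (min_le_left _ _)
    omega
  have hj₀hi : j₀ = k+1 ∨ r < (j₀+1) * a := by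
    by_cases hc : r / a ≤ k+1
    · right
      have : j₀ = r / a := by omega
      rw [this]
      have : (r/a + 1) * a = a * (r/a) + a := by ring
      omega
    · left; omega
  have hmem : ∀ j, j ∈ range (k+2) →
      (((y - ((j*a : ℕ) : ZMod b)).val < (if j ≤ k then a else b - (k+1)*a)) ↔ j = j₀) := by
    intro j hj
    rw [mem_range] at hj
    have hja : j * a ≤ (k+1) * a := Nat.mul_le_mul_right a (by omega)
    rw [val_sub_nat y (j*a) (by omega), ← hr]
    rcases lt_trichotomy j j₀ with hlt | heq | hgt
    · -- j < j₀ : left window, mass distance ≥ a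
      have h1 : (j+1) * a ≤ j₀ * a := Nat.mul_le_mul_right a (by omega)
      have h2 : (j+1) * a = j*a + a := by ring
      have hjk : j ≤ k := by omega
      simp only [if_pos hjk, if_pos (by omega : j*a ≤ r)]
      constructor
      · intro h; omega
      · intro h; omega
    · -- j = j₀
      rw [heq]
      simp only [if_pos hj₀a]
      constructor
      · intro _; trivial
      · intro _
        by_cases hjk : j₀ ≤ k
        · simp only [if_pos hjk]
          have hne : j₀ ≠ k+1 := by omega
          have hub : r < (j₀+1)*a := by tauto
          have hexp : (j₀+1)*a = j₀*a + a := by ring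
          omega
        · simp only [if_neg hjk]
          have hje : j₀ = k+1 := by omega
          rw [hje]
          omega
    · -- j > j₀
      have hj₀k : j₀ ≠ k+1 := by omega
      have hub : r < (j₀+1) * a := by tauto
      have h1 : (j₀+1) * a ≤ j * a := Nat.mul_le_mul_right a (by omega)
      have hjar : ¬ (j * a ≤ r) := by omega
      simp only [if_neg hjar]
      constructor
      · intro h
        exfalso
        by_cases hjk : j ≤ k
        · rw [if_pos hjk] at h
          have h2 : (j+1) * a ≤ (k+1) * a := Nat.mul_le_mul_right a (by omega)
          have h3 : (j+1) * a = j*a + a := by ring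
          omega
        · rw [if_neg hjk] at h
          have hje : j = k+1 := by omega
          rw [hje] at h
          omega
      · intro h; omega
  calc ∑ j ∈ range (k+2),
        (if (y - ((j*a : ℕ) : ZMod b)).val < (if j ≤ k then a else b - (k+1)*a) then C else 0)
      = ∑ j ∈ range (k+2), (if j = j₀ then C else 0) := by
        apply Finset.sum_congr rfl
        intro j hj
        rw [if_congr (hmem j hj) rfl rfl]
    _ = C := by
        rw [Finset.sum_ite_eq' (range (k+2)) j₀ (fun _ => C)]
        rw [if_pos (mem_range.mpr (by omega))]

lemma discrete_circle {b a k n : ℕ} [NeZero b]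
    (ha : (k+1)*a < b) (hb : b ≤ (k+2)*a)
    (c : Fin n → ℝ) (hc : ∀ i, 0 ≤ c i) (hM : ∑ i, c i ≤ 1)
    (t' : ℝ) (ht' : ((k:ℝ)+1)/((k:ℝ)+2) < t')
    (u : Fin n → ZMod b) :
    ((univ : Finset (ZMod b)).filter
      (fun θ => t' ≤ ∑ i ∈ univ.filter (fun i => ¬((u i - θ).val < a)), c i)).card ≤ b - a := by
  have hb0 : 0 < b := Nat.pos_of_ne_zero (NeZero.ne b)
  have ha0 : 0 < a := by
    rcases Nat.eq_zero_or_pos a with h | h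
    · subst h; simp at hb; omega
    · exact h
  set M : ℝ := ∑ i, c i with hMdef
  set fm : ℕ → ZMod b → ℝ := fun len θ => ∑ i, if (u i - θ).val < len then c i else 0 with hfm
  set w : ℕ := b - (k+1)*a with hw
  have hexp : (k+2)*a = (k+1)*a + a := by ring
  have hw1 : 1 ≤ w := by omega
  have hwa : w ≤ a := by omega
  set S := (univ : Finset (ZMod b)).filter
      (fun θ => t' ≤ ∑ i ∈ univ.filter (fun i => ¬((u i - θ).val < a)), c i) with hS
  rcases S.eq_empty_or_nonempty with hSe | hSne
  · rw [hSe]; simp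
  -- success mass identity
  have hsplit : ∀ θ : ZMod b,
      (∑ i ∈ univ.filter (fun i => ¬((u i - θ).val < a)), c i) = M - fm a θ := by
    intro θ
    have h1 : fm a θ = ∑ i ∈ univ.filter (fun i => (u i - θ).val < a), c i := by
      rw [hfm]; exact Finset.sum_filter _ _ |>.symm
    have h2 := Finset.sum_filter_add_sum_filter_not (univ : Finset (Fin n))
      (fun i => (u i - θ).val < a) c
    rw [h1]; rw [hMdef]; linarith [h2]
  have htM : t' ≤ M := by
    obtain ⟨θ₀, hθ₀⟩ := hSne
    rw [hS, mem_filter] at hθ₀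
    have h2 := hθ₀.2
    rw [hsplit θ₀] at h2
    have h3 : 0 ≤ fm a θ₀ := by
      rw [hfm]
      apply Finset.sum_nonneg
      intro i _
      split_ifs
      · exact hc i
      · exact le_refl 0
    linarith
  set s : ℝ := M - t' with hs
  set B := (univ : Finset (ZMod b)).filter (fun θ => s < fm a θ) with hB
  set B' := (univ : Finset (ZMod b)).filter (fun θ => s < fm w θ) with hB'
  -- partition of the mass
  have hpart : ∀ θ : ZMod b,
      ∑ j ∈ range (k+2), fm (if j ≤ k then a else w) (θ + ((j*a : ℕ) : ZMod b)) = M := by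
    intro θ
    rw [hfm, hMdef]
    rw [Finset.sum_comm]
    apply Finset.sum_congr rfl
    intro i _
    have hrw : ∀ j : ℕ, u i - (θ + ((j*a : ℕ) : ZMod b)) = (u i - θ) - ((j*a : ℕ) : ZMod b) := by
      intro j; ring
    calc ∑ j ∈ range (k+2), (if (u i - (θ + ((j*a:ℕ) : ZMod b))).val < (if j ≤ k then a else w)
            then c i else 0)
        = ∑ j ∈ range (k+2), (if ((u i - θ) - ((j*a:ℕ) : ZMod b)).val < (if j ≤ k then a else
            b - (k+1)*a) then c i else 0) := by
          apply Finset.sum_congr rfl; intro j _; rw [hrw j]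
      _ = c i := window_unique ha hb (u i - θ) (c i)
  -- in every partition at least one heavy window
  have hks : ((k:ℝ)+2) * s < M := by
    have h1 : ((k:ℝ)+1) < ((k:ℝ)+2) * t' := by
      have hkpos : (0:ℝ) < (k:ℝ)+2 := by positivity
      rw [div_lt_iff₀ hkpos] at ht'
      linarith
    have h2 : ((k:ℝ)+1) * M ≤ ((k:ℝ)+1) := by nlinarith [htM]
    rw [hs]; ring_nf; nlinarith
  have hheavy : ∀ θ : ZMod b, ∃ j ∈ range (k+2),
      s < fm (if j ≤ k then a else w) (θ + ((j*a : ℕ) : ZMod b)) := by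
    intro θ
    by_contra hcon
    push_neg at hcon
    have : ∑ j ∈ range (k+2), fm (if j ≤ k then a else w) (θ + ((j*a : ℕ) : ZMod b))
        ≤ ∑ j ∈ range (k+2), s := Finset.sum_le_sum (fun j hj => hcon j hj)
    rw [hpart θ, Finset.sum_const, card_range, nsmul_eq_mul] at this
    push_cast at this
    linarith
  -- covering bound
  have hcover : b ≤ (k+1) * B.card + B'.card := by
    have hsub : (univ : Finset (ZMod b)) ⊆
        ((range (k+1)).biUnion (fun j => B.image (· - ((j*a : ℕ) : ZMod b)))) ∪
          (B'.image (· - (((k+1)*a : ℕ) : ZMod b))) := by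
      intro θ _
      obtain ⟨j, hjm, hjheavy⟩ := hheavy θ
      rw [mem_range] at hjm
      rw [Finset.mem_union]
      by_cases hjk : j ≤ k
      · left
        rw [Finset.mem_biUnion]
        refine ⟨j, mem_range.mpr (by omega), ?_⟩
        rw [Finset.mem_image]
        refine ⟨θ + ((j*a : ℕ) : ZMod b), ?_, by ring⟩
        rw [hB, mem_filter]
        refine ⟨mem_univ _, ?_⟩
        rw [if_pos hjk] at hjheavy
        exact hjheavy
      · right
        have hje : j = k+1 := by omega
        rw [Finset.mem_image]
        refine ⟨θ + (((k+1)*a : ℕ) : ZMod b), ?_, by ring⟩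
        rw [hB', mem_filter]
        refine ⟨mem_univ _, ?_⟩
        rw [hje, if_neg (by omega)] at hjheavy
        exact hjheavy
    have hcard := Finset.card_le_card hsub
    rw [Finset.card_univ, ZMod.card] at hcard
    have hA := Finset.card_union_le
      (((range (k+1)).biUnion (fun j => B.image (· - ((j*a : ℕ) : ZMod b)))))
      (B'.image (· - (((k+1)*a : ℕ) : ZMod b)))
    have hB2 : (((range (k+1)).biUnion (fun j => B.image (· - ((j*a : ℕ) : ZMod b))))).card
        ≤ ∑ j ∈ range (k+1), (B.image (· - ((j*a : ℕ) : ZMod b))).card :=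
      Finset.card_biUnion_le
    have hC2 : (∑ j ∈ range (k+1), (B.image (· - ((j*a : ℕ) : ZMod b))).card)
        ≤ ∑ _j ∈ range (k+1), B.card :=
      Finset.sum_le_sum (fun j _ => Finset.card_image_le)
    have hD2 : (B'.image (· - (((k+1)*a : ℕ) : ZMod b))).card ≤ B'.card :=
      Finset.card_image_le
    rw [Finset.sum_const, card_range, smul_eq_mul] at hC2
    omega
  -- B has at least a elements
  have hBa : a ≤ B.card := by
    by_cases hcase : w ≤ B'.card
    · have hB'ne : B'.Nonempty := Finset.card_pos.mp (by omega)
      have hT := sumset_card B' hB'ne (a - w)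
      have hTB : (univ.filter fun x => ∃ j : ℕ, j ≤ a - w ∧ x + (j : ZMod b) ∈ B') ⊆ B := by
        intro x hx
        rw [mem_filter] at hx
        obtain ⟨_, j, hj, hjB'⟩ := hx
        rw [hB', mem_filter] at hjB'
        have hmass : fm w (x + (j : ZMod b)) ≤ fm a x := by
          rw [hfm]
          apply Finset.sum_le_sum
          intro i _
          have hawle : a - w ≤ a := Nat.sub_le _ _
          have habk : a ≤ (k+1)*a := Nat.le_mul_of_pos_left a (by omega)
          have hjb : j < b := by omega
          have himp : (u i - (x + (j : ZMod b))).val < w → (u i - x).val < a := by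
            intro hlt
            have hrw2 : u i - (x + (j : ZMod b)) = (u i - x) - (j : ZMod b) := by ring
            rw [hrw2] at hlt
            rw [val_sub_nat (u i - x) j hjb] at hlt
            have hvlt : (u i - x).val < b := ZMod.val_lt _
            split_ifs at hlt with hc1
            · omega
            · omega
          split_ifs with h1 h2
          · exact le_refl _
          · exact absurd (himp h1) h2
          · exact hc i
          · exact le_refl _
        rw [hB, mem_filter]
        exact ⟨mem_univ _, lt_of_lt_of_le hjB'.2 hmass⟩
      have hcT := Finset.card_le_card hTB
      have haw : a - w + w = a := Nat.sub_add_cancel hwa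
      have hab : a ≤ (k+1)*a := Nat.le_mul_of_pos_left a (by omega)
      omega
    · have hlt : B'.card < w := by omega
      have hbw : w + (k+1)*a = b := Nat.sub_add_cancel (le_of_lt ha)
      have h1 : (k+1)*a < (k+1)*B.card := by omega
      have := Nat.lt_of_mul_lt_mul_left h1
      omega
  -- success set avoids B
  have hSB : S ⊆ univ \ B := by
    intro θ hθ
    rw [hS, mem_filter] at hθ
    rw [Finset.mem_sdiff]
    refine ⟨mem_univ _, ?_⟩
    rw [hB, mem_filter]
    rintro ⟨-, hbad⟩
    have h2 := hθ.2
    rw [hsplit θ] at h2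
    rw [hs] at hbad
    linarith
  have hfin := Finset.card_le_card hSB
  rw [Finset.card_sdiff_of_subset (Finset.subset_univ B), Finset.card_univ, ZMod.card] at hfin
  have hBle : B.card ≤ b := by
    have := Finset.card_le_univ B
    rwa [ZMod.card] at this
  omega

lemma card_val_lt {b : ℕ} [NeZero b] (a : ℕ) (hab : a ≤ b) :
    ((univ : Finset (ZMod b)).filter (fun x => x.val < a)).card = a := by
  have hb0 : 0 < b := Nat.pos_of_ne_zero (NeZero.ne b)
  have hset : (univ : Finset (ZMod b)).filter (fun x => x.val < a)
      = (range a).image (Nat.cast : ℕ → ZMod b) := by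
    ext x
    simp only [mem_filter, mem_univ, true_and, Finset.mem_image, mem_range]
    constructor
    · intro hx
      refine ⟨x.val, hx, ?_⟩
      simp [ZMod.natCast_val, ZMod.cast_id]
    · rintro ⟨m, hm, rfl⟩
      rw [ZMod.val_natCast]
      exact lt_of_le_of_lt (Nat.mod_le _ _) (by omega)
  rw [hset, Finset.card_image_of_injOn, card_range]
  intro m₁ h₁ m₂ h₂ hcast
  simp only [coe_range, Set.mem_Iio] at h₁ h₂
  have := congrArg ZMod.val hcast
  rwa [ZMod.val_natCast, ZMod.val_natCast, Nat.mod_eq_of_lt (by omega),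
    Nat.mod_eq_of_lt (by omega)] at this

noncomputable def Fpoly (n : ℕ) (c : Fin n → ℝ) (t' : ℝ) (x : ℝ) : ℝ :=
  ∑ σ : Fin n → Bool,
    if t' ≤ ∑ i ∈ univ.filter (fun i => σ i = true), c i then
      (∏ i, if σ i then x else 1 - x) else 0

lemma Fpoly_rat_le {b a k n : ℕ} [NeZero b]
    (ha : (k+1)*a < b) (hb : b ≤ (k+2)*a)
    (c : Fin n → ℝ) (hc : ∀ i, 0 ≤ c i) (hM : ∑ i, c i ≤ 1)
    (t' : ℝ) (ht' : ((k:ℝ)+1)/((k:ℝ)+2) < t') :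
    Fpoly n c t' (((b:ℝ) - a)/b) ≤ ((b:ℝ) - a)/b := by
  have hb0 : 0 < b := Nat.pos_of_ne_zero (NeZero.ne b)
  have ha0 : 0 < a := by
    rcases Nat.eq_zero_or_pos a with h | h
    · subst h; simp at hb; omega
    · exact h
  have hab : a ≤ b := by
    have : a ≤ (k+1)*a := Nat.le_mul_of_pos_left a (by omega)
    omega
  -- the success-at-θ set of configurations
  set succ : ZMod b → (Fin n → ZMod b) → Prop :=
    fun θ u => t' ≤ ∑ i ∈ univ.filter (fun i => ¬((u i - θ).val < a)), c i with hsucc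
  classical
  set N : ℕ := ((univ : Finset (Fin n → ZMod b)).filter (succ 0)).card with hN
  -- (a) same count at every θ
  have hshift : ∀ θ : ZMod b,
      ((univ : Finset (Fin n → ZMod b)).filter (succ θ)).card = N := by
    intro θ
    rw [hN]
    apply Finset.card_bij' (fun u _ => fun i => u i - θ) (fun v _ => fun i => v i + θ)
    · intro u hu
      rw [mem_filter] at hu ⊢
      refine ⟨mem_univ _, ?_⟩
      have h2 := hu.2
      rw [hsucc] at h2 ⊢
      simpa [sub_zero] using h2
    · intro v hv
      rw [mem_filter] at hv ⊢
      refine ⟨mem_univ _, ?_⟩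
      have h2 := hv.2
      rw [hsucc] at h2 ⊢
      simp only [sub_zero] at h2
      simpa [add_sub_cancel_right] using h2
    · intro u _; funext i; simp
    · intro v _; funext i; simp
  -- (b) double counting
  have hdouble : b * N ≤ (b - a) * b ^ n := by
    have hθsum : ∑ θ : ZMod b, ((univ : Finset (Fin n → ZMod b)).filter (succ θ)).card
        = b * N := by
      rw [Finset.sum_congr rfl (fun θ _ => hshift θ), Finset.sum_const, Finset.card_univ,
        ZMod.card, smul_eq_mul]
    have hswap : ∑ θ : ZMod b, ((univ : Finset (Fin n → ZMod b)).filter (succ θ)).card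
        = ∑ u : Fin n → ZMod b, ((univ : Finset (ZMod b)).filter (fun θ => succ θ u)).card := by
      simp only [Finset.card_filter]
      exact Finset.sum_comm
    have hper : ∀ u : Fin n → ZMod b,
        ((univ : Finset (ZMod b)).filter (fun θ => succ θ u)).card ≤ b - a :=
      fun u => discrete_circle ha hb c hc hM t' ht' u
    have : ∑ u : Fin n → ZMod b, ((univ : Finset (ZMod b)).filter (fun θ => succ θ u)).card
        ≤ ∑ _u : Fin n → ZMod b, (b - a) := Finset.sum_le_sum (fun u _ => hper u)
    rw [Finset.sum_const, Finset.card_univ, Fintype.card_fun, Fintype.card_fin, ZMod.card,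
      smul_eq_mul] at this
    calc b * N = ∑ θ : ZMod b, ((univ : Finset (Fin n → ZMod b)).filter (succ θ)).card :=
          hθsum.symm
      _ = _ := hswap
      _ ≤ b ^ n * (b - a) := this
      _ = (b - a) * b ^ n := by ring
  -- (c) N as a sum over patterns
  set pattern : (Fin n → ZMod b) → (Fin n → Bool) := fun u i => decide (a ≤ (u i).val)
    with hpat
  have hNpat : (N : ℝ) = ∑ σ : Fin n → Bool,
      if t' ≤ ∑ i ∈ univ.filter (fun i => σ i = true), c i then
        ((∏ i, if σ i then ((b - a : ℕ) : ℝ) else ((a : ℕ) : ℝ))) else 0 := by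
    have hcard1 : ∀ σ : Fin n → Bool, ∀ u : Fin n → ZMod b, pattern u = σ →
        (succ 0 u ↔ t' ≤ ∑ i ∈ univ.filter (fun i => σ i = true), c i) := by
      intro σ u hp
      have hfeq : (univ.filter (fun i => ¬((u i - 0).val < a)))
          = univ.filter (fun i => σ i = true) := by
        ext i
        simp only [mem_filter, mem_univ, true_and, sub_zero]
        rw [← hp]
        simp [hpat, Nat.not_lt]
      constructor
      · intro h
        have h' : t' ≤ ∑ i ∈ filter (fun i => ¬((u i - 0).val < a)) univ, c i := h
        rwa [hfeq] at h'
      · intro h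
        show t' ≤ ∑ i ∈ filter (fun i => ¬((u i - 0).val < a)) univ, c i
        rwa [hfeq]
    rw [hN, Finset.card_eq_sum_card_fiberwise
      (f := pattern) (t := univ) (fun u _ => mem_univ _)]
    push_cast
    apply Finset.sum_congr rfl
    intro σ _
    by_cases hval : t' ≤ ∑ i ∈ univ.filter (fun i => σ i = true), c i
    · rw [if_pos hval]
      have hfe : (filter (succ 0) univ).filter (fun u => pattern u = σ)
          = Fintype.piFinset
            (fun i => univ.filter (fun x : ZMod b => decide (a ≤ x.val) = σ i)) := by
        ext u
        simp only [Finset.filter_filter, mem_filter, mem_univ, true_and,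
          Fintype.mem_piFinset]
        constructor
        · rintro ⟨hs, hp⟩ i
          rw [← hp]
        · intro h
          have hp : pattern u = σ := by funext i; exact h i
          exact ⟨(hcard1 σ u hp).mpr hval, hp⟩
      rw [hfe, Fintype.card_piFinset]
      push_cast
      apply Finset.prod_congr rfl
      intro i _
      by_cases hσ : σ i
      · rw [if_pos hσ]
        have : (univ.filter (fun x : ZMod b => decide (a ≤ x.val) = σ i))
            = univ.filter (fun x : ZMod b => ¬ (x.val < a)) := by
          ext x; simp [hσ, Nat.not_lt]
        rw [this]
        have hsum := Finset.card_filter_add_card_filter_not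
          (s := (univ : Finset (ZMod b))) (p := fun x : ZMod b => x.val < a)
        rw [card_val_lt a hab, Finset.card_univ, ZMod.card] at hsum
        have : (univ.filter (fun x : ZMod b => ¬ (x.val < a))).card = b - a := by omega
        rw [this]
      · rw [if_neg hσ]
        have hσ' : σ i = false := by
          cases h : σ i
          · rfl
          · exact absurd h hσ
        have : (univ.filter (fun x : ZMod b => decide (a ≤ x.val) = σ i))
            = univ.filter (fun x : ZMod b => x.val < a) := by
          ext x; simp [hσ']
        rw [this, card_val_lt a hab]
    · rw [if_neg hval]
      have : (filter (succ 0) univ).filter (fun u => pattern u = σ) = ∅ := by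
        apply Finset.eq_empty_of_forall_notMem
        intro u hu
        simp only [Finset.filter_filter, mem_filter, mem_univ, true_and] at hu
        exact hval ((hcard1 σ u hu.2).mp hu.1)
      rw [this]
      simp
  -- (d) conclude
  have hbR : (0:ℝ) < (b:ℝ) := by exact_mod_cast hb0
  have hbnR : (0:ℝ) < (b:ℝ)^n := by positivity
  have hFeq : Fpoly n c t' (((b:ℝ) - a)/b) = (N : ℝ) / (b:ℝ)^n := by
    rw [Fpoly, hNpat, Finset.sum_div]
    apply Finset.sum_congr rfl
    intro σ _
    by_cases hval : t' ≤ ∑ i ∈ univ.filter (fun i => σ i = true), c i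
    · rw [if_pos hval, if_pos hval]
      have h1x : 1 - ((b:ℝ) - a)/b = (a:ℝ)/b := by field_simp; ring
      rw [h1x]
      have : (∏ i : Fin n, if σ i then ((b:ℝ) - a)/b else (a:ℝ)/b)
          = (∏ i : Fin n, (if σ i then ((b:ℝ) - a) else (a:ℝ)) / b) := by
        apply Finset.prod_congr rfl
        intro i _
        by_cases hσ : σ i <;> simp [hσ]
      rw [this, Finset.prod_div_distrib, Finset.prod_const, Finset.card_univ,
        Fintype.card_fin]
      congr 1
      apply Finset.prod_congr rfl
      intro i _
      by_cases hσ : σ i <;> simp [hσ, Nat.cast_sub hab]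
    · rw [if_neg hval, if_neg hval, zero_div]
  rw [hFeq]
  rw [div_le_div_iff₀ hbnR hbR]
  have hcast : ((b:ℝ) - a) * (b:ℝ)^n = (((b-a) * b^n : ℕ) : ℝ) := by
    push_cast [Nat.cast_sub hab]
    ring
  rw [hcast]
  have : (N : ℝ) * (b : ℝ) = ((b * N : ℕ) : ℝ) := by push_cast; ring
  rw [this]
  exact_mod_cast hdouble

lemma finite_event_toReal {Ω : Type*} [MeasurableSpace Ω] (μ : Measure Ω)
    [IsProbabilityMeasure μ]
    (p : ℝ) (hp0 : 0 ≤ p) (hp1 : p ≤ 1)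
    (β : ℕ → Ω → ℝ) (hmeas : ∀ i, Measurable (β i))
    (hval : ∀ i ω, β i ω = 0 ∨ β i ω = 1)
    (hβp : ∀ i, μ {ω | β i ω = 1} = ENNReal.ofReal p)
    (hindep : iIndepFun β μ)
    (n : ℕ) (c' : Fin n → ℝ) (t' : ℝ) :
    (μ {ω | t' ≤ ∑ i : Fin n, c' i * β (i : ℕ) ω}).toReal = Fpoly n c' t' p := by
  classical
  have hβ0 : ∀ i, μ {ω | β i ω = 0} = 1 - ENNReal.ofReal p := by
    intro i
    have hcompl : {ω | β i ω = 0} = {ω | β i ω = 1}ᶜ := by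
      ext ω
      simp only [Set.mem_setOf_eq, Set.mem_compl_iff]
      constructor
      · intro h h1; rw [h] at h1; norm_num at h1
      · intro h; rcases hval i ω with h0 | h1
        · exact h0
        · exact absurd h1 h
    have hm1 : MeasurableSet {ω | β i ω = 1} := by
      have : {ω | β i ω = 1} = (β i) ⁻¹' {1} := rfl
      rw [this]
      exact (hmeas i) (measurableSet_singleton 1)
    rw [hcompl, measure_compl hm1 (measure_ne_top μ _), hβp i, measure_univ]
  -- the value per pattern
  set bval : (Fin n → Bool) → ℕ → ℝ :=
    fun σ i => if h : i < n then (if σ ⟨i, h⟩ then 1 else 0) else 0 with hbval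
  set A : (Fin n → Bool) → Set Ω :=
    fun σ => ⋂ i ∈ Finset.range n, {ω | β i ω = bval σ i} with hA
  have hAmeas : ∀ σ, MeasurableSet (A σ) := by
    intro σ
    apply Finset.measurableSet_biInter
    intro i _
    exact (hmeas i) (measurableSet_singleton _)
  have hAμ : ∀ σ, μ (A σ) =
      ∏ i ∈ Finset.range n, (if bval σ i = 1 then ENNReal.ofReal p
        else 1 - ENNReal.ofReal p) := by
    intro σ
    show μ (⋂ i ∈ Finset.range n, {ω | β i ω = bval σ i}) = _
    rw [hindep.meas_biInter (s := fun i => {ω | β i ω = bval σ i})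
      (fun i _ => ⟨{bval σ i}, measurableSet_singleton _, rfl⟩)]
    apply Finset.prod_congr rfl
    intro i hi
    rw [mem_range] at hi
    by_cases hσb : bval σ i = 1
    · rw [if_pos hσb, hσb, hβp i]
    · rw [if_neg hσb]
      have hred : bval σ i = if σ ⟨i, hi⟩ then (1:ℝ) else 0 := by
        show (if h : i < n then (if σ ⟨i, h⟩ then (1:ℝ) else 0) else 0) = _
        rw [dif_pos hi]
      have hb0 : bval σ i = 0 := by
        rw [hred] at hσb ⊢
        by_cases h : σ ⟨i, hi⟩
        · rw [if_pos h] at hσb; norm_num at hσb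
        · rw [if_neg h]
      rw [hb0, hβ0 i]
  -- event decomposition
  have hE : {ω | t' ≤ ∑ i : Fin n, c' i * β (i : ℕ) ω}
      = ⋃ σ ∈ ((univ : Finset (Fin n → Bool)).filter
          (fun σ => t' ≤ ∑ i ∈ univ.filter (fun i => σ i = true), c' i)), A σ := by
    ext ω
    simp only [Set.mem_setOf_eq, Set.mem_iUnion, Finset.mem_coe, mem_filter, mem_univ,
      true_and, exists_prop]
    have hsum : ∀ σ : Fin n → Bool, (∀ i : Fin n, β i ω = if σ i then 1 else 0) →
        ∑ i : Fin n, c' i * β (i : ℕ) ω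
          = ∑ i ∈ univ.filter (fun i => σ i = true), c' i := by
      intro σ hσ
      rw [Finset.sum_filter]
      apply Finset.sum_congr rfl
      intro i _
      rw [hσ i]
      by_cases h : σ i <;> simp [h]
    constructor
    · intro hω
      set σω : Fin n → Bool := fun i => decide (β i ω = 1) with hσω
      have hβσ : ∀ i : Fin n, β i ω = if σω i then 1 else 0 := by
        intro i
        rw [hσω]
        rcases hval i ω with h0 | h1
        · rw [h0]; simp only [decide_eq_true_eq]
          rw [if_neg (by rw [h0]; norm_num)]
        · rw [h1]; simp only [decide_eq_true_eq]
          rw [if_pos (by rw [h1])]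
      refine ⟨σω, ?_, ?_⟩
      · rw [← hsum σω hβσ]; exact hω
      · rw [hA]
        simp only [Set.mem_iInter, Set.mem_setOf_eq]
        intro i hi
        rw [mem_range] at hi
        rw [hbval]
        simp only [dif_pos hi]
        exact hβσ ⟨i, hi⟩
    · rintro ⟨σ, hvalid, hωA⟩
      have hβσ : ∀ i : Fin n, β i ω = if σ i then 1 else 0 := by
        intro i
        rw [hA] at hωA
        simp only [Set.mem_iInter, Set.mem_setOf_eq] at hωA
        have := hωA i (mem_range.mpr i.isLt)
        rw [hbval] at this
        simpa [dif_pos i.isLt] using this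
      rw [hsum σ hβσ]
      exact hvalid
  rw [hE]
  rw [measure_biUnion_finset ?hdisj (fun σ _ => hAmeas σ)]
  case hdisj =>
    intro σ hσ τ hτ hne
    simp only [Function.onFun]
    rw [Set.disjoint_left]
    intro ω hωσ hωτ
    have hne' : ∃ i : Fin n, σ i ≠ τ i := by
      by_contra hcon
      push_neg at hcon
      exact hne (funext hcon)
    obtain ⟨i, hi⟩ := hne'
    rw [hA] at hωσ hωτ
    simp only [Set.mem_iInter, Set.mem_setOf_eq] at hωσ hωτ
    have h1 := hωσ i (mem_range.mpr i.isLt)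
    have h2 := hωτ i (mem_range.mpr i.isLt)
    rw [h1] at h2
    rw [hbval] at h2
    simp only [dif_pos i.isLt, Fin.eta] at h2
    by_cases hσi : σ i <;> by_cases hτi : τ i <;> simp [hσi, hτi] at h2 hi
  -- convert to real
  rw [ENNReal.toReal_sum (fun σ _ => measure_ne_top μ _)]
  rw [Fpoly, ← Finset.sum_filter]
  apply Finset.sum_congr rfl
  intro σ hσ
  rw [hAμ σ, ENNReal.toReal_prod]
  have hfact : ∀ i : ℕ, i < n →
      ((if bval σ i = 1 then ENNReal.ofReal p else 1 - ENNReal.ofReal p)).toReal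
        = (if bval σ i = 1 then p else 1 - p) := by
    intro i _
    by_cases h : bval σ i = 1
    · rw [if_pos h, if_pos h, ENNReal.toReal_ofReal hp0]
    · rw [if_neg h, if_neg h]
      have : (1 : ℝ≥0∞) - ENNReal.ofReal p = ENNReal.ofReal (1 - p) := by
        rw [ENNReal.ofReal_sub 1 hp0, ENNReal.ofReal_one]
      rw [this, ENNReal.toReal_ofReal (by linarith)]
  calc ∏ i ∈ Finset.range n,
        ((if bval σ i = 1 then ENNReal.ofReal p else 1 - ENNReal.ofReal p)).toReal
      = ∏ i ∈ Finset.range n, (if bval σ i = 1 then p else 1 - p) :=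
        Finset.prod_congr rfl (fun i hi => hfact i (mem_range.mp hi))
    _ = ∏ i : Fin n, (if bval σ (i : ℕ) = 1 then p else 1 - p) := by
        rw [Fin.prod_univ_eq_prod_range (fun i => (if bval σ i = 1 then p else 1 - p)) n]
    _ = ∏ i : Fin n, (if σ i then p else 1 - p) := by
        apply Finset.prod_congr rfl
        intro i _
        have hb : bval σ (i : ℕ) = if σ i then 1 else 0 := by
          rw [hbval]; simp only [dif_pos i.isLt, Fin.eta]
        rw [hb]
        by_cases h : σ i <;> simp [h]

/-- **Favorable odds: bold play is optimal.** If `k/(k+1) < p ≤ (k+1)/(k+2) < t ≤ 1`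
for a positive integer `k`, then for every nonnegative stake sequence `(c i)` summing
to `1` placed on iid Bernoulli(p) bets, `P(∑ c i * β i ≥ t) ≤ p`, with equality for
the single stake `c 0 = 1` (bold play). -/
theorem boldPlay_optimal_favorable_odds {Ω : Type*} [MeasurableSpace Ω]
    (μ : Measure Ω) [IsProbabilityMeasure μ] (p t : ℝ)
    (β : ℕ → Ω → ℝ) (hmeas : ∀ i, Measurable (β i))
    (hval : ∀ i ω, β i ω = 0 ∨ β i ω = 1)
    (hβp : ∀ i, μ {ω | β i ω = 1} = ENNReal.ofReal p)
    (hindep : iIndepFun β μ)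
    (k : ℕ) (hk : 0 < k)
    (hkp : (k : ℝ) / (k + 1) < p) (hpk : p ≤ (k + 1 : ℝ) / (k + 2))
    (hkt : (k + 1 : ℝ) / (k + 2) < t) (ht1 : t ≤ 1) :
    (∀ c : ℕ → ℝ, (∀ i, 0 ≤ c i) → (∑' i, c i) = 1 →
      (μ {ω | t ≤ ∑' i, c i * β i ω}).toReal ≤ p) ∧
    (μ {ω | t ≤ β 0 ω}).toReal = p := by
  have hk1 : (0:ℝ) < (k:ℝ) + 1 := by positivity
  have hk2 : (0:ℝ) < (k:ℝ) + 2 := by positivity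
  have hp0 : 0 ≤ p := le_of_lt (lt_of_le_of_lt (by positivity) hkp)
  have hp1 : p ≤ 1 := by
    apply le_trans hpk
    rw [div_le_one hk2]; linarith
  constructor
  · -- main inequality
    intro c hc hcsum
    -- summability
    have hsum : Summable c := by
      by_contra hns
      rw [tsum_eq_zero_of_not_summable hns] at hcsum
      norm_num at hcsum
    set θ₀ : ℝ := ((k:ℝ)+1)/((k:ℝ)+2) with hθ₀
    have hθ₀t : θ₀ < t := hkt
    -- choose n with small tail
    obtain ⟨n, hn⟩ : ∃ n : ℕ, 1 - (t - θ₀) < ∑ i ∈ Finset.range n, c i := by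
      have htend := hsum.hasSum.tendsto_sum_nat
      rw [hcsum] at htend
      have hlt : (1:ℝ) - (t - θ₀) < 1 := by linarith
      exact (htend.eventually (eventually_gt_nhds hlt)).exists
    set tail : ℝ := ∑' i, c (i + n) with htail
    have hsplitc := Summable.sum_add_tsum_nat_add (f := c) n hsum
    rw [hcsum] at hsplitc
    have htail_lt : tail < t - θ₀ := by
      rw [htail]; linarith
    have htail_nonneg : 0 ≤ tail := tsum_nonneg (fun i => hc (i + n))
    set t' : ℝ := t - tail with ht'
    have ht'θ : θ₀ < t' := by rw [ht']; linarith
    set c' : Fin n → ℝ := fun i => c i with hc'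
    have hc'0 : ∀ i, 0 ≤ c' i := fun i => hc i
    have hc'sum : ∑ i, c' i ≤ 1 := by
      rw [hc']
      rw [Fin.sum_univ_eq_sum_range (fun i => c i) n]
      have := Summable.sum_le_tsum (Finset.range n) (fun i _ => hc i) hsum
      rwa [hcsum] at this
    -- event inclusion
    have hincl : {ω | t ≤ ∑' i, c i * β i ω}
        ⊆ {ω | t' ≤ ∑ i : Fin n, c' i * β (i : ℕ) ω} := by
      intro ω hω
      simp only [Set.mem_setOf_eq] at hω ⊢
      have hβ01 : ∀ i, 0 ≤ β i ω ∧ β i ω ≤ 1 := by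
        intro i
        rcases hval i ω with h | h <;> rw [h] <;> norm_num
      have hg_le : ∀ i, c i * β i ω ≤ c i := by
        intro i
        calc c i * β i ω ≤ c i * 1 := by
              apply mul_le_mul_of_nonneg_left (hβ01 i).2 (hc i)
          _ = c i := mul_one _
      have hg_nonneg : ∀ i, 0 ≤ c i * β i ω :=
        fun i => mul_nonneg (hc i) (hβ01 i).1
      have hgsum : Summable (fun i => c i * β i ω) :=
        Summable.of_nonneg_of_le hg_nonneg hg_le hsum
      have hsplitg := Summable.sum_add_tsum_nat_add (f := fun i => c i * β i ω) n hgsum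
      have htailg : ∑' i, c (i + n) * β (i + n) ω ≤ tail := by
        rw [htail]
        apply Summable.tsum_le_tsum (fun i => hg_le (i + n))
          ((summable_nat_add_iff n).mpr hgsum) ((summable_nat_add_iff n).mpr hsum)
      have : t ≤ (∑ i ∈ Finset.range n, c i * β i ω) + tail := by
        calc t ≤ ∑' i, c i * β i ω := hω
          _ = (∑ i ∈ Finset.range n, c i * β i ω) + ∑' i, c (i + n) * β (i + n) ω :=
              hsplitg.symm
          _ ≤ _ := by linarith
      rw [ht']
      rw [Fin.sum_univ_eq_sum_range (fun i => c i * β i ω) n]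
      linarith
    -- measure bound
    have hmono := measure_mono (μ := μ) hincl
    have htoReal : (μ {ω | t ≤ ∑' i, c i * β i ω}).toReal
        ≤ (μ {ω | t' ≤ ∑ i : Fin n, c' i * β (i : ℕ) ω}).toReal :=
      ENNReal.toReal_mono (measure_ne_top μ _) hmono
    rw [finite_event_toReal μ p hp0 hp1 β hmeas hval hβp hindep n c' t'] at htoReal
    -- now bound the polynomial at p
    have hratbound : ∀ r : ℚ, (k:ℝ)/((k:ℝ)+1) < (r:ℝ) → (r:ℝ) ≤ ((k:ℝ)+1)/((k:ℝ)+2) →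
        Fpoly n c' t' (r:ℝ) ≤ (r:ℝ) := by
      intro r hr1 hr2
      set q : ℚ := 1 - r with hqdef
      have hq_pos : 0 < q := by
        rw [hqdef]
        have : (r:ℝ) < 1 := lt_of_le_of_lt hr2 (by rw [div_lt_one hk2]; linarith)
        have : r < 1 := by exact_mod_cast this
        linarith
      set b : ℕ := q.den with hbdef
      set a : ℕ := q.num.toNat with hadef
      have hb0 : 0 < b := q.pos
      haveI : NeZero b := ⟨by omega⟩
      have hnum_pos : 0 < q.num := Rat.num_pos.mpr hq_pos
      have haq : (q:ℝ) = (a:ℝ)/(b:ℝ) := by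
        show (q:ℝ) = ((q.num.toNat : ℕ) : ℝ)/((q.den : ℕ) : ℝ)
        rw [Rat.cast_def]
        congr 1
        rw [← Int.cast_natCast (R := ℝ), Int.toNat_of_nonneg hnum_pos.le]
      have hqr : (q:ℝ) = 1 - (r:ℝ) := by rw [hqdef]; push_cast; ring
      have hbR : (0:ℝ) < (b:ℝ) := by exact_mod_cast hb0
      -- range conditions
      have hcond1 : (k+1)*a < b := by
        have h1 : (q:ℝ) < 1/((k:ℝ)+1) := by
          rw [hqr]
          rw [div_lt_iff₀ hk1] at hr1
          rw [lt_div_iff₀ hk1]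
          ring_nf
          ring_nf at hr1
          linarith
        rw [haq, div_lt_div_iff₀ hbR hk1] at h1
        have : ((k:ℝ)+1) * (a:ℝ) < (b:ℝ) := by linarith
        exact_mod_cast this
      have hcond2 : b ≤ (k+2)*a := by
        have h1 : 1/((k:ℝ)+2) ≤ (q:ℝ) := by
          rw [hqr]
          rw [le_div_iff₀ hk2] at hr2
          rw [div_le_iff₀ hk2]
          linarith
        rw [haq, div_le_div_iff₀ hk2 hbR] at h1
        have : (b:ℝ) ≤ ((k:ℝ)+2) * (a:ℝ) := by linarith
        exact_mod_cast this
      have hres := Fpoly_rat_le hcond1 hcond2 c' hc'0 hc'sum t' ht'θ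
      have hxeq : ((b:ℝ) - a)/b = (r:ℝ) := by
        have : ((b:ℝ) - a)/b = 1 - (a:ℝ)/b := by field_simp
        rw [this, ← haq, hqr]; ring
      rwa [hxeq] at hres
    -- pass to the limit
    have hFp : Fpoly n c' t' p ≤ p := by
      have hcont : Continuous (fun x : ℝ => Fpoly n c' t' x) := by
        unfold Fpoly
        apply continuous_finset_sum
        intro σ _
        by_cases hcond : t' ≤ ∑ i ∈ univ.filter (fun i => σ i = true), c' i
        · simp only [if_pos hcond]
          apply continuous_finset_prod
          intro i _
          by_cases h : σ i
          · simpa [h] using continuous_id'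
          · simp only [if_neg h]; exact continuous_const.sub continuous_id'
        · simp only [if_neg hcond]
          exact continuous_const
      -- rational sequence increasing to p
      have hseq : ∀ m : ℕ, ∃ r : ℚ, max ((k:ℝ)/((k:ℝ)+1)) (p - 1/((m:ℝ)+1)) < (r:ℝ)
          ∧ (r:ℝ) < p := by
        intro m
        apply exists_rat_btwn
        apply max_lt hkp
        have : (0:ℝ) < 1/((m:ℝ)+1) := by positivity
        linarith
      choose r hr1 hr2 using hseq
      have hrk : ∀ m, (k:ℝ)/((k:ℝ)+1) < (r m : ℝ) :=
        fun m => lt_of_le_of_lt (le_max_left _ _) (hr1 m)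
      have hrbound : ∀ m, Fpoly n c' t' (r m : ℝ) ≤ (r m : ℝ) :=
        fun m => hratbound (r m) (hrk m) (le_trans (le_of_lt (hr2 m)) hpk)
      have hlow : ∀ m : ℕ, p - 1/((m:ℝ)+1) ≤ (r m : ℝ) :=
        fun m => le_of_lt (lt_of_le_of_lt (le_max_right _ _) (hr1 m))
      have htendlow : Filter.Tendsto (fun m : ℕ => p - 1/((m:ℝ)+1)) Filter.atTop (nhds p) := by
        have h1 : Filter.Tendsto (fun m : ℕ => 1/((m:ℝ)+1)) Filter.atTop (nhds 0) :=
          tendsto_one_div_add_atTop_nhds_zero_nat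
        have := Filter.Tendsto.sub (tendsto_const_nhds (x := p)) h1
        simpa using this
      have htendr : Filter.Tendsto (fun m : ℕ => (r m : ℝ)) Filter.atTop (nhds p) := by
        apply tendsto_of_tendsto_of_tendsto_of_le_of_le htendlow tendsto_const_nhds
          hlow (fun m => le_of_lt (hr2 m))
      have htendF : Filter.Tendsto (fun m : ℕ => Fpoly n c' t' (r m : ℝ))
          Filter.atTop (nhds (Fpoly n c' t' p)) :=
        (hcont.tendsto p).comp htendr
      exact le_of_tendsto_of_tendsto' htendF htendr hrbound
    linarith
  · -- second conjunct
    have hset : {ω | t ≤ β 0 ω} = {ω | β 0 ω = 1} := by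
      ext ω
      simp only [Set.mem_setOf_eq]
      have ht0 : 0 < t := lt_trans (by positivity) hkt
      constructor
      · intro h
        rcases hval 0 ω with h0 | h1
        · rw [h0] at h; linarith
        · exact h1
      · intro h; rw [h]; exact ht1
    rw [hset, hβp 0, ENNReal.toReal_ofReal hp0]
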